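/- Let G be an m×n matrix over F₂ with columns v₁,…,vₙ, and let V ⊆ F₂ⁿ be the span of the rows of G. Suppose K ≥ 1 is an integer such that for every index i with vᵢ ≠ 0 there exist at least K pairwise disjoint two-element sets {j,l} ⊆ {1,…,n}∖{i} with vᵢ = vⱼ + vₗ. Then dim V ≤ log₂( Σ_{i=0}^{⌊n/(K+1)⌋} C(n,i) ) ≤ (n·log₂(K+1) + n/ln 2)/(K+1), where C(n,i) denotes the binomial coefficient. -/

import Mathlib

open Finset

namespace MainAux

variable {m n : ℕ}

lemma addself (x : Fin m → ZMod 2) : x + x = 0 :=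
  funext fun r => CharTwo.add_self_eq_zero _

lemma zmod2_cases (x : ZMod 2) : x = 0 ∨ x = 1 := by fin_cases x; exacts [Or.inl rfl, Or.inr rfl]

noncomputable def key (m : ℕ) : (Fin m → ZMod 2) → ℕ :=
  fun x => ((Fintype.equivFin (Fin m → ZMod 2)) x : ℕ)

lemma key_inj : Function.Injective (key m) := by
  intro a b h
  exact (Fintype.equivFin _).injective (Fin.val_injective h)

def corners (x va vb : Fin m → ZMod 2) : Finset (Fin m → ZMod 2) :=
  {x, x + va, x + vb, x + va + vb}

lemma corners_nonempty (x va vb : Fin m → ZMod 2) : (corners x va vb).Nonempty :=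
  ⟨x, by simp [corners]⟩

noncomputable def mu (x va vb : Fin m → ZMod 2) : ℕ :=
  ((corners x va vb).image (key m)).min' ((corners_nonempty x va vb).image _)

lemma corners_add_left (x va vb : Fin m → ZMod 2) :
    corners (x + va) va vb = corners x va vb := by
  have e2 : (x + va) + va = x := by rw [add_assoc, addself, add_zero]
  have e3 : (x + va) + va + vb = x + vb := by rw [e2]
  show ({x+va, (x+va)+va, (x+va)+vb, (x+va)+va+vb} : Finset _) = _
  rw [e3, e2]
  ext z
  simp only [corners, mem_insert, mem_singleton]
  tauto

lemma corners_add_right (x va vb : Fin m → ZMod 2) :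
    corners (x + vb) va vb = corners x va vb := by
  have e1 : (x + vb) + vb = x := by rw [add_assoc, addself, add_zero]
  have e2 : (x + vb) + va = x + va + vb := by rw [add_right_comm]
  have e3 : (x + vb) + va + vb = x + va := by
    rw [e2, add_assoc, addself, add_zero]
  show ({x+vb, (x+vb)+va, (x+vb)+vb, (x+vb)+va+vb} : Finset _) = _
  rw [e3, e2, e1]
  ext z
  simp only [corners, mem_insert, mem_singleton]
  tauto

lemma mu_mem (x va vb : Fin m → ZMod 2) :
    ∃ c ∈ corners x va vb, key m c = mu x va vb := by
  have h := Finset.min'_mem ((corners x va vb).image (key m))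
    ((corners_nonempty x va vb).image _)
  rw [Finset.mem_image] at h
  obtain ⟨c, hc, hkc⟩ := h
  exact ⟨c, hc, hkc⟩



variable {m n : ℕ}

lemma min'_congr {s t : Finset ℕ} (hs : s.Nonempty) (ht : t.Nonempty) (h : s = t) :
    s.min' hs = t.min' ht := by subst h; rfl

lemma mu_congr {x y va vb : Fin m → ZMod 2} (h : corners x va vb = corners y va vb) :
    mu x va vb = mu y va vb :=
  min'_congr _ _ (by rw [h])

section Core

variable (v : Fin n → Fin m → ZMod 2) (S : Finset (Fin n))
  (Q : Fin n → Finset (Finset (Fin n)))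

/-- minimality hypothesis, reformulated -/
def Min1 : Prop :=
  ∀ T : Finset (Fin n), (∑ i ∈ T, v i) = 0 → S.card ≤ (symmDiff S T).card

def GoodQ : Prop :=
  ∀ i ∈ S, (↑(Q i) : Set (Finset (Fin n))).PairwiseDisjoint id ∧
    ∀ p ∈ Q i, ∃ j l, j ≠ l ∧ p = {j, l} ∧ i ∉ p ∧ v i = v j + v l

/-- classes of a vertex -/
noncomputable def Cl (y : Fin n) : Finset (Fin n) :=
  letI := Classical.decEq (Finset (Fin n))
  letI : ∀ i, Decidable (∃ p ∈ Q i, y ∈ p) := fun i => Classical.propDecidable _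
  S.filter (fun i => ∃ p ∈ Q i, y ∈ p)

lemma mem_Cl {y i : Fin n} : i ∈ Cl S Q y ↔ i ∈ S ∧ ∃ p ∈ Q i, y ∈ p := by
  simp [Cl]

noncomputable def kappa (y : Fin n) : Option (Fin n) :=
  if h1 : (Cl S Q y).card = 1 then some ((Cl S Q y).min' (Finset.card_pos.mp (by omega)))
  else if h2 : (Cl S Q y).card = 2 then
    letI a := (Cl S Q y).min' (Finset.card_pos.mp (by omega))
    letI b := (Cl S Q y).max' (Finset.card_pos.mp (by omega))
    if mu (v y) (v a) (v b) = key m (v y) ∨ mu (v y) (v a) (v b) = key m (v y + v a + v b)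
      then some a else some b
  else none

lemma kappa_card_one {y c : Fin n} (h1 : (Cl S Q y).card = 1) (hc : c ∈ Cl S Q y) :
    kappa v S Q y = some c := by
  obtain ⟨d, hd⟩ := Finset.card_eq_one.mp h1
  have hcd : c = d := by rwa [hd, Finset.mem_singleton] at hc
  have hall : ∀ x ∈ Cl S Q y, x = c := by
    intro x hx
    exact Finset.card_le_one.mp (by omega) x hx c hc
  rw [kappa, dif_pos h1]
  congr 1
  exact hall _ (Finset.min'_mem _ _)

lemma min'_pair {a b : Fin n} (hab : a < b) :
    ({a, b} : Finset (Fin n)).min' ⟨a, by simp⟩ = a := by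
  apply le_antisymm (Finset.min'_le _ _ (by simp))
  apply Finset.le_min'
  intro y hy
  rcases Finset.mem_insert.mp hy with h | h
  · exact le_of_eq h.symm
  · rw [Finset.mem_singleton] at h; exact h ▸ hab.le

lemma max'_pair {a b : Fin n} (hab : a < b) :
    ({a, b} : Finset (Fin n)).max' ⟨a, by simp⟩ = b := by
  apply le_antisymm
  · apply Finset.max'_le
    intro y hy
    rcases Finset.mem_insert.mp hy with h | h
    · exact h ▸ hab.le
    · rw [Finset.mem_singleton] at h; exact le_of_eq h
  · exact Finset.le_max' _ _ (by simp)

lemma kappa_pair {y a b : Fin n} (hab : a < b) (hCl : Cl S Q y = {a, b}) :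
    kappa v S Q y =
      some (if mu (v y) (v a) (v b) = key m (v y) ∨
          mu (v y) (v a) (v b) = key m (v y + v a + v b) then a else b) := by
  have hcard : (Cl S Q y).card = 2 := by rw [hCl]; exact Finset.card_pair hab.ne
  have hmin : (Cl S Q y).min' (Finset.card_pos.mp (by omega)) = a := by
    simp only [hCl]; exact min'_pair hab
  have hmax : (Cl S Q y).max' (Finset.card_pos.mp (by omega)) = b := by
    simp only [hCl]; exact max'_pair hab
  rw [kappa, dif_neg (by omega), dif_pos hcard]
  simp only [hmin, hmax]
  split_ifs <;> rfl

lemma cancel4 (a b c d : Fin m → ZMod 2) :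
    ((a + b) + (c + d)) + ((a + c) + (b + d)) = 0 := by
  funext r
  have h : ∀ x y z w : ZMod 2, ((x + y) + (z + w)) + ((x + z) + (y + w)) = 0 := by decide
  exact h (a r) (b r) (c r) (d r)

lemma card_symmDiff_aux (s t : Finset (Fin n)) :
    (symmDiff s t).card + 2 * (s ∩ t).card = s.card + t.card := by
  have h1 : (symmDiff s t).card = (s \ t).card + (t \ s).card := by
    rw [symmDiff_def, Finset.sup_eq_union]
    exact Finset.card_union_of_disjoint (disjoint_sdiff_sdiff)
  have h2 : (s \ t).card + (s ∩ t).card = s.card := Finset.card_sdiff_add_card_inter s t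
  have h3 : (t \ s).card + (t ∩ s).card = t.card := Finset.card_sdiff_add_card_inter t s
  have h4 : (t ∩ s).card = (s ∩ t).card := by rw [Finset.inter_comm]
  omega

lemma Hcard (hmin : Min1 v S) (T : Finset (Fin n)) (h0 : ∑ i ∈ T, v i = 0) :
    2 * (S ∩ T).card ≤ T.card := by
  have h := hmin T h0
  have h2 := card_symmDiff_aux S T
  omega

lemma C4 (hmin : Min1 v S) {O : Finset (Fin n)} (hO : O ⊆ S)
    (h0 : ∑ i ∈ O, v i = 0) : O = ∅ := by
  have h := Hcard v S hmin O h0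
  rw [Finset.inter_eq_right.mpr hO] at h
  exact Finset.card_eq_zero.mp (by omega)

lemma C1 (hmin : Min1 v S) {i : Fin n} (hi : i ∈ S) : v i ≠ 0 := by
  intro h0
  have := C4 v S hmin (Finset.singleton_subset_iff.mpr hi) (by simp [h0])
  simp at this

lemma C2 (hmin : Min1 v S) {i i' : Fin n} (hi : i ∈ S) (hi' : i' ∈ S)
    (hne : i ≠ i') : v i ≠ v i' := by
  intro he
  have hsub : ({i, i'} : Finset (Fin n)) ⊆ S := by
    intro x hx
    rcases Finset.mem_insert.mp hx with h | h
    · exact h ▸ hi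
    · exact (Finset.mem_singleton.mp h) ▸ hi'
  have hsum : ∑ x ∈ ({i, i'} : Finset (Fin n)), v x = 0 := by
    rw [Finset.sum_pair hne, he, addself]
  have := C4 v S hmin hsub hsum
  simp at this

lemma C5 (hmin : Min1 v S) {a b : Fin n} (ha : a ∉ S) (hb : b ∉ S)
    {O : Finset (Fin n)} (hO : O ⊆ S)
    (hsum : v a + v b + ∑ i ∈ O, v i = 0) : O.card ≤ 2 := by
  by_cases hab : a = b
  · subst hab
    have h0 : ∑ i ∈ O, v i = 0 := by
      have h' : v a + v a = 0 := addself _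
      rw [h', zero_add] at hsum
      exact hsum
    rw [C4 v S hmin hO h0]
    simp
  · have hbO : b ∉ O := fun h => hb (hO h)
    have haO : a ∉ O := fun h => ha (hO h)
    have haT : a ∉ insert b O := by simp [hab, haO]
    set T : Finset (Fin n) := insert a (insert b O) with hT
    have hsum' : ∑ i ∈ T, v i = 0 := by
      rw [hT, Finset.sum_insert haT, Finset.sum_insert hbO, ← add_assoc]
      exact hsum
    have h := Hcard v S hmin T hsum'
    have hST : S ∩ T = O := by
      ext x
      simp only [hT, Finset.mem_inter, Finset.mem_insert]
      constructor
      · rintro ⟨hxS, (h | h | h)⟩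
        · exact absurd (h ▸ hxS) ha
        · exact absurd (h ▸ hxS) hb
        · exact h
      · intro hx
        exact ⟨hO hx, Or.inr (Or.inr hx)⟩
    have hTcard : T.card = O.card + 2 := by
      rw [hT, Finset.card_insert_of_notMem haT, Finset.card_insert_of_notMem hbO]
    rw [hST] at h
    omega

lemma C3 (hmin : Min1 v S) (hQ : GoodQ v S Q) {i : Fin n} (hi : i ∈ S)
    {p : Finset (Fin n)} (hp : p ∈ Q i) : ∀ x ∈ p, x ∉ S := by
  obtain ⟨j, l, hjl, hpeq, hip, hvi⟩ := (hQ i hi).2 p hp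
  have hsum : ∑ x ∈ insert i p, v x = 0 := by
    rw [Finset.sum_insert hip, hpeq, Finset.sum_pair hjl, ← hvi, addself]
  intro x hxp hxS
  have h := Hcard v S hmin (insert i p) hsum
  have hxi : x ≠ i := fun h' => hip (h' ▸ hxp)
  have hsub : ({i, x} : Finset (Fin n)) ⊆ S ∩ insert i p := by
    intro y hy
    rcases Finset.mem_insert.mp hy with h' | h'
    · subst h'; exact Finset.mem_inter.mpr ⟨hi, Finset.mem_insert_self _ _⟩
    · rw [Finset.mem_singleton] at h'; subst h'
      exact Finset.mem_inter.mpr ⟨hxS, Finset.mem_insert_of_mem hxp⟩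
  have h2 : 2 ≤ (S ∩ insert i p).card := by
    calc 2 = ({i, x} : Finset (Fin n)).card := (Finset.card_pair (Ne.symm hxi)).symm
    _ ≤ _ := Finset.card_le_card hsub
  have h3 : (insert i p).card = 3 := by
    rw [Finset.card_insert_of_notMem hip, hpeq, Finset.card_pair hjl]
  omega

lemma partner (hmin : Min1 v S) (hQ : GoodQ v S Q) {i' y : Fin n} {q : Finset (Fin n)}
    (hi' : i' ∈ S) (hq : q ∈ Q i') (hy : y ∈ q) :
    ∃ a, a ∉ S ∧ v a = v y + v i' := by
  obtain ⟨j, l, hjl, hqeq, hiq, hvi⟩ := (hQ i' hi').2 q hq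
  have hC3 := C3 v S Q hmin hQ hi' hq
  subst hqeq
  rcases Finset.mem_insert.mp hy with h | h
  · refine ⟨l, hC3 l (by simp), ?_⟩
    rw [h, hvi, ← add_assoc, addself, zero_add]
  · rw [Finset.mem_singleton] at h
    refine ⟨j, hC3 j (by simp), ?_⟩
    rw [h, hvi, add_comm (v j) (v l), ← add_assoc, addself, zero_add]

lemma L1 (hmin : Min1 v S) (hQ : GoodQ v S Q) {i i' i'' j l : Fin n}
    (hi : i ∈ S) (hvi : v i = v j + v l)
    (hij : i' ∈ Cl S Q j) (hne' : i' ≠ i)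
    (hil : i'' ∈ Cl S Q l) (hne'' : i'' ≠ i) : i' = i'' := by
  by_contra hcon
  obtain ⟨hi'S, q, hq, hjq⟩ := (mem_Cl S Q).mp hij
  obtain ⟨hi''S, r, hr, hlr⟩ := (mem_Cl S Q).mp hil
  obtain ⟨a, haS, hva⟩ := partner v S Q hmin hQ hi'S hq hjq
  obtain ⟨b, hbS, hvb⟩ := partner v S Q hmin hQ hi''S hr hlr
  have hinotmem : i ∉ ({i', i''} : Finset (Fin n)) := by
    simp [Ne.symm hne', Ne.symm hne'']
  set O : Finset (Fin n) := insert i {i', i''} with hO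
  have hOS : O ⊆ S := by
    intro x hx
    simp only [hO, Finset.mem_insert, Finset.mem_singleton] at hx
    rcases hx with h | h | h <;> subst h <;> assumption
  have hOcard : O.card = 3 := by
    rw [hO, Finset.card_insert_of_notMem hinotmem, Finset.card_pair hcon]
  have hOsum : ∑ x ∈ O, v x = v i + (v i' + v i'') := by
    rw [hO, Finset.sum_insert hinotmem, Finset.sum_pair hcon]
  have hkey : v a + v b + ∑ x ∈ O, v x = 0 := by
    rw [hOsum, hva, hvb, hvi]
    exact cancel4 (v j) (v i') (v l) (v i'')
  have := C5 v S hmin haS hbS hOS hkey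
  omega

lemma K1 (hmin : Min1 v S) (hQ : GoodQ v S Q) {i j l : Fin n} {p : Finset (Fin n)}
    (hi : i ∈ S) (hp : p ∈ Q i) (hjl : j ≠ l) (hpeq : p = {j, l})
    (hvi : v i = v j + v l) :
    kappa v S Q j = some i ∨ kappa v S Q l = some i := by
  have hij : i ∈ Cl S Q j := (mem_Cl S Q).mpr ⟨hi, p, hp, by simp [hpeq]⟩
  have hil : i ∈ Cl S Q l := (mem_Cl S Q).mpr ⟨hi, p, hp, by simp [hpeq]⟩
  have hc1j : 1 ≤ (Cl S Q j).card := Finset.card_pos.mpr ⟨i, hij⟩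
  have hc1l : 1 ≤ (Cl S Q l).card := Finset.card_pos.mpr ⟨i, hil⟩
  by_cases e1 : (Cl S Q j).card = 1
  · exact Or.inl (kappa_card_one v S Q e1 hij)
  by_cases e2 : (Cl S Q l).card = 1
  · exact Or.inr (kappa_card_one v S Q e2 hil)
  have hvil : v i = v l + v j := by rw [hvi, add_comm]
  have key3 : ∀ y z : Fin n, v i = v y + v z → i ∈ Cl S Q y → i ∈ Cl S Q z →
      2 ≤ (Cl S Q z).card → ¬ (3 ≤ (Cl S Q y).card) := by
    intro y z hvyz hiy hiz hz h3
    obtain ⟨i'', hi''ne, hi''mem⟩ : ∃ i'', i'' ≠ i ∧ i'' ∈ Cl S Q z := by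
      obtain ⟨x, hx⟩ := Finset.card_pos.mp
        (show 0 < ((Cl S Q z).erase i).card by
          rw [Finset.card_erase_of_mem hiz]; omega)
      exact ⟨x, (Finset.mem_erase.mp hx).1, (Finset.mem_erase.mp hx).2⟩
    obtain ⟨a1, ha1, a2, ha2, ha12⟩ :=
      Finset.one_lt_card.mp
        (show 1 < ((Cl S Q y).erase i).card by
          rw [Finset.card_erase_of_mem hiy]; omega)
    have h1 := L1 v S Q hmin hQ hi hvyz (Finset.mem_erase.mp ha1).2
      (Finset.mem_erase.mp ha1).1 hi''mem hi''ne
    have h2 := L1 v S Q hmin hQ hi hvyz (Finset.mem_erase.mp ha2).2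
      (Finset.mem_erase.mp ha2).1 hi''mem hi''ne
    exact ha12 (h1.trans h2.symm)
  have h2j : (Cl S Q j).card = 2 := by
    have := key3 j l hvi hij hil (by omega)
    omega
  have h2l : (Cl S Q l).card = 2 := by
    have := key3 l j hvil hil hij (by omega)
    omega
  have pair_of : ∀ y, i ∈ Cl S Q y → (Cl S Q y).card = 2 →
      ∃ i', i' ≠ i ∧ Cl S Q y = {i, i'} := by
    intro y hiy h2
    obtain ⟨x, w, hxw, hset⟩ := Finset.card_eq_two.mp h2
    rw [hset, Finset.mem_insert, Finset.mem_singleton] at hiy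
    rcases hiy with h | h
    · subst h
      exact ⟨w, fun hc => hxw hc.symm, hset⟩
    · subst h
      refine ⟨x, fun hc => hxw hc, by rw [hset, Finset.pair_comm]⟩
  obtain ⟨i', hi'ne, hClj⟩ := pair_of j hij h2j
  obtain ⟨i''0, hi''ne0, hCll0⟩ := pair_of l hil h2l
  have heq : i' = i''0 := by
    refine L1 v S Q hmin hQ hi hvi ?_ hi'ne ?_ hi''ne0
    · rw [hClj]; simp
    · rw [hCll0]; simp
  have hCll : Cl S Q l = {i, i'} := by rw [hCll0, ← heq]
  set a := min i i' with ha
  set b := max i i' with hb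
  have hii' : i ≠ i' := fun h => hi'ne h.symm
  have hab : a < b := min_lt_max.mpr hii'
  have hpair : ({i, i'} : Finset (Fin n)) = {a, b} := by
    rcases le_total i i' with h | h
    · rw [ha, hb, min_eq_left h, max_eq_right h]
    · rw [ha, hb, min_eq_right h, max_eq_left h, Finset.pair_comm]
  have hiab : i = a ∨ i = b := by
    rcases le_total i i' with h | h
    · left; rw [ha, min_eq_left h]
    · right; rw [hb, max_eq_left h]
  have hClj' : Cl S Q j = {a, b} := by rw [hClj, hpair]
  have hCll' : Cl S Q l = {a, b} := by rw [hCll, hpair]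
  have haS : a ∈ S := ((mem_Cl S Q).mp (by rw [hClj']; simp : a ∈ Cl S Q j)).1
  have hbS : b ∈ S := ((mem_Cl S Q).mp (by rw [hClj']; simp : b ∈ Cl S Q j)).1
  have hA0 : v a ≠ 0 := C1 v S hmin haS
  have hB0 : v b ≠ 0 := C1 v S hmin hbS
  have hkj := kappa_pair v S Q hab hClj'
  have hkl := kappa_pair v S Q hab hCll'
  have hvl : v l = v j + v i := by
    rw [hvi, ← add_assoc, addself, zero_add]
  have hcorn : corners (v l) (v a) (v b) = corners (v j) (v a) (v b) := by
    rcases hiab with h | h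
    · have hvl' : v l = v j + v a := by rw [hvl, h]
      rw [hvl']
      exact corners_add_left (v j) (v a) (v b)
    · have hvl' : v l = v j + v b := by rw [hvl, h]
      rw [hvl']
      exact corners_add_right (v j) (v a) (v b)
  have hmu : mu (v l) (v a) (v b) = mu (v j) (v a) (v b) :=
    mu_congr hcorn
  obtain ⟨c, hc, hkc⟩ := mu_mem (v j) (v a) (v b)
  simp only [corners, Finset.mem_insert, Finset.mem_singleton] at hc
  have d1 : v j ≠ v j + v a := fun h => hA0 ((left_eq_add).mp h)
  have d2 : v j ≠ v j + v b := fun h => hB0 ((left_eq_add).mp h)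
  have d3 : v j + v a + v b ≠ v j + v a := fun h => hB0 ((left_eq_add).mp h.symm)
  have d4 : v j + v a + v b ≠ v j + v b := by
    rw [add_right_comm]
    exact fun h => hA0 ((left_eq_add).mp h.symm)
  have ea : v j + v a + v a = v j := by rw [add_assoc, addself, add_zero]
  have eb : v j + v b + v b = v j := by rw [add_assoc, addself, add_zero]
  rcases hiab with hia | hib
  · -- i = a
    obtain h1 : v l = v j + v a := by rw [hvl, ← hia]
    obtain h2 : v l + v a + v b = v j + v b := by
      rw [h1, ea]
    by_cases hPj : mu (v j) (v a) (v b) = key m (v j) ∨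
        mu (v j) (v a) (v b) = key m (v j + v a + v b)
    · left; rw [hkj, if_pos hPj, ← hia]
    · right
      have hPl : mu (v l) (v a) (v b) = key m (v l) ∨
          mu (v l) (v a) (v b) = key m (v l + v a + v b) := by
        rw [hmu, h2, h1]
        rcases hc with h | h | h | h
        · exact absurd (Or.inl (by rw [← hkc, h])) hPj
        · left; rw [← hkc, h]
        · right; rw [← hkc, h]
        · exact absurd (Or.inr (by rw [← hkc, h])) hPj
      rw [hkl, if_pos hPl, ← hia]
  · -- i = b
    obtain h1 : v l = v j + v b := by rw [hvl, ← hib]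
    obtain h2 : v l + v a + v b = v j + v a := by
      rw [h1, add_right_comm (v j) (v b) (v a), add_assoc, addself, add_zero]
    by_cases hPj : mu (v j) (v a) (v b) = key m (v j) ∨
        mu (v j) (v a) (v b) = key m (v j + v a + v b)
    · right
      have hPl : ¬ (mu (v l) (v a) (v b) = key m (v l) ∨
          mu (v l) (v a) (v b) = key m (v l + v a + v b)) := by
        rw [hmu, h2, h1]
        rintro (h | h) <;> rcases hPj with h' | h'
        · exact d2 (key_inj (h'.symm.trans h))
        · exact d4 (key_inj (h'.symm.trans h))
        · exact d1 (key_inj (h'.symm.trans h))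
        · exact d3 (key_inj (h'.symm.trans h))
      rw [hkl, if_neg hPl, ← hib]
    · left; rw [hkj, if_neg hPj, ← hib]

lemma core (hmin : Min1 v S) (hQ : GoodQ v S Q) (K : ℕ)
    (hcard : ∀ i ∈ S, (Q i).card = K) : S.card * (K + 1) ≤ n := by
  classical
  set tgt : (Σ _ : Fin n, Finset (Fin n)) → Fin n :=
    fun e => if h : ∃ y ∈ e.2, kappa v S Q y = some e.1 then h.choose else e.1 with htgtdef
  have htgt : ∀ e ∈ S.sigma Q, tgt e ∈ e.2 ∧ kappa v S Q (tgt e) = some e.1 := by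
    intro e he
    have he1 : e.1 ∈ S := (Finset.mem_sigma.mp he).1
    have he2 : e.2 ∈ Q e.1 := (Finset.mem_sigma.mp he).2
    obtain ⟨j, l, hjl, hpeq, hip, hvi⟩ := (hQ e.1 he1).2 e.2 he2
    have hex : ∃ y ∈ e.2, kappa v S Q y = some e.1 := by
      rcases K1 v S Q hmin hQ he1 he2 hjl hpeq hvi with h | h
      · exact ⟨j, by simp [hpeq], h⟩
      · exact ⟨l, by simp [hpeq], h⟩
    have : tgt e = hex.choose := by rw [htgtdef]; exact dif_pos hex
    rw [this]
    exact hex.choose_spec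
  have hmaps : ∀ e ∈ S.sigma Q, tgt e ∈ Sᶜ := by
    intro e he
    rw [Finset.mem_compl]
    exact C3 v S Q hmin hQ (Finset.mem_sigma.mp he).1 (Finset.mem_sigma.mp he).2
      _ (htgt e he).1
  have hinj : Set.InjOn tgt ↑(S.sigma Q) := by
    intro e he f hf heq
    have he' : e ∈ S.sigma Q := he
    have hf' : f ∈ S.sigma Q := hf
    obtain ⟨hte, hke⟩ := htgt e he'
    obtain ⟨htf, hkf⟩ := htgt f hf'
    have h1 : e.1 = f.1 := by
      have : some e.1 = some f.1 := by rw [← hke, heq, hkf]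
      exact Option.some.inj this
    have h2 : e.2 = f.2 := by
      by_contra hne
      have hd := (hQ e.1 (Finset.mem_sigma.mp he').1).1
      have hf2 : f.2 ∈ Q e.1 := by rw [h1]; exact (Finset.mem_sigma.mp hf').2
      have hdisj := hd (Finset.mem_coe.mpr (Finset.mem_sigma.mp he').2)
        (Finset.mem_coe.mpr hf2) hne
      have htef : tgt e ∈ f.2 := by rw [heq]; exact htf
      exact (Finset.disjoint_left.mp hdisj) hte htef
    exact Sigma.ext h1 (heq_of_eq h2)
  have hle := Finset.card_le_card_of_injOn tgt hmaps hinj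
  have hcard1 : (S.sigma Q).card = S.card * K := by
    rw [Finset.card_sigma, Finset.sum_congr rfl hcard, Finset.sum_const, smul_eq_mul]
  rw [hcard1, Finset.card_compl, Fintype.card_fin] at hle
  have hSn : S.card ≤ n := by
    have := Finset.card_le_univ S
    simpa using this
  have hmul : S.card * (K + 1) = S.card * K + S.card := by ring
  omega

end Core

section Bridge

variable {m n : ℕ}

def supp (x : Fin n → ZMod 2) : Finset (Fin n) :=
  Finset.univ.filter (fun i => x i ≠ 0)

def ind (T : Finset (Fin n)) : Fin n → ZMod 2 := fun i => if i ∈ T then 1 else 0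

lemma supp_add_ind (z : Fin n → ZMod 2) (T : Finset (Fin n)) :
    supp (z + ind T) = symmDiff (supp z) T := by
  have e11 : (1 : ZMod 2) + 1 = 0 := by decide
  have e01 : (0 : ZMod 2) + 1 = 1 := by decide
  ext i
  simp only [supp, Finset.mem_filter]
  simp only [supp, ind, Finset.mem_filter, Finset.mem_univ, true_and,
    Finset.mem_symmDiff, Pi.add_apply]
  by_cases h : i ∈ T <;> rcases zmod2_cases (z i) with h0 | h0 <;>
    simp [h, h0, e11, e01]

lemma ind_supp (z : Fin n → ZMod 2) : ind (supp z) = z := by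
  funext i
  rcases zmod2_cases (z i) with h | h <;> simp [ind, supp, h]

lemma covering {K : ℕ} (A : Matrix (Fin m) (Fin n) (ZMod 2))
    (v : Fin n → Fin m → ZMod 2) (hv : ∀ i r, v i r = A r i)
    (hpairs : ∀ i : Fin n, v i ≠ 0 →
      ∃ P : Finset (Finset (Fin n)),
        K ≤ P.card ∧
        (P : Set (Finset (Fin n))).PairwiseDisjoint id ∧
        ∀ s ∈ P, ∃ j l : Fin n, j ≠ l ∧ s = {j, l} ∧ i ∉ s ∧ v i = v j + v l)
    (y : Fin n → ZMod 2) :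
    ∃ s : Finset (Fin n), s.card * (K + 1) ≤ n ∧
      Submodule.Quotient.mk (p := LinearMap.ker A.mulVecLin) (ind s) =
        Submodule.Quotient.mk y := by
  classical
  set W := LinearMap.ker A.mulVecLin with hW
  obtain ⟨z, hz, hzmin⟩ : ∃ z : Fin n → ZMod 2, (z - y ∈ W) ∧
      ∀ x : Fin n → ZMod 2, x - y ∈ W → (supp z).card ≤ (supp x).card := by
    obtain ⟨z, hz1, hz2⟩ := Finset.exists_min_image
      (Finset.univ.filter fun x : Fin n → ZMod 2 => x - y ∈ W)
      (fun x => (supp x).card) ⟨y, by simp⟩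
    exact ⟨z, (Finset.mem_filter.mp hz1).2, fun x hx => hz2 x (by simp [hx])⟩
  set S := supp z with hS
  have hmin : Min1 v S := by
    intro T hT
    have hindW : ind T ∈ W := by
      rw [hW, LinearMap.mem_ker]
      have hr : ∀ r, ∑ i, A r i * ind T i = 0 := by
        intro r
        have h1 : ∑ i, A r i * ind T i = ∑ i ∈ T, A r i := by
          simp only [ind, mul_ite, mul_one, mul_zero]
          rw [Finset.sum_ite_mem, Finset.univ_inter]
        have h2 : ∑ i ∈ T, A r i = 0 := by
          have h3 := congrFun hT r
          rw [Finset.sum_apply] at h3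
          simp only [hv] at h3
          exact h3
        rw [h1, h2]
      funext r
      simpa [Matrix.mulVecLin_apply, Matrix.mulVec, dotProduct] using hr r
    have hcoset : (z + ind T) - y ∈ W := by
      have heq : (z + ind T) - y = (z - y) + ind T := by abel
      rw [heq]
      exact W.add_mem hz hindW
    have := hzmin (z + ind T) hcoset
    rwa [supp_add_ind] at this
  have hQex : ∀ i ∈ S, ∃ Qi : Finset (Finset (Fin n)), Qi.card = K ∧
      (↑Qi : Set (Finset (Fin n))).PairwiseDisjoint id ∧
      ∀ p ∈ Qi, ∃ j l, j ≠ l ∧ p = {j, l} ∧ i ∉ p ∧ v i = v j + v l := by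
    intro i hi
    obtain ⟨P, hPcard, hPdisj, hPprop⟩ := hpairs i (C1 v S hmin hi)
    obtain ⟨Qi, hQsub, hQcard⟩ := Finset.exists_subset_card_eq hPcard
    refine ⟨Qi, hQcard, hPdisj.subset ?_, fun p hp => hPprop p (hQsub hp)⟩
    exact_mod_cast hQsub
  choose Qf hQ1 hQ2 hQ3 using hQex
  set Q : Fin n → Finset (Finset (Fin n)) :=
    fun i => if h : i ∈ S then Qf i h else ∅ with hQdef
  have hQgood : GoodQ v S Q := by
    intro i hi
    rw [hQdef]
    simp only [dif_pos hi]
    exact ⟨hQ2 i hi, hQ3 i hi⟩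
  have hQcard : ∀ i ∈ S, (Q i).card = K := by
    intro i hi
    rw [hQdef]
    simp only [dif_pos hi]
    exact hQ1 i hi
  refine ⟨S, core v S Q hmin hQgood K hQcard, ?_⟩
  rw [hS, ind_supp, Submodule.Quotient.eq]
  exact hz

end Bridge

lemma card_ball (n R : ℕ) :
    Fintype.card {s : Finset (Fin n) // s.card ≤ R} =
      ∑ i ∈ Finset.range (R + 1), n.choose i := by
  classical
  rw [Fintype.card_subtype]
  have hset : (Finset.univ.filter fun s : Finset (Fin n) => s.card ≤ R)
      = (Finset.range (R + 1)).biUnion (fun k => Finset.powersetCard k Finset.univ) := by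
    ext s
    simp only [Finset.mem_filter, Finset.mem_univ, true_and, Finset.mem_biUnion,
      Finset.mem_range, Finset.mem_powersetCard, Nat.lt_succ_iff, Finset.subset_univ]
    constructor
    · intro h
      exact ⟨s.card, h, rfl⟩
    · rintro ⟨k, hk, rfl⟩
      exact hk
  rw [hset, Finset.card_biUnion]
  · apply Finset.sum_congr rfl
    intro k _
    rw [Finset.card_powersetCard, Finset.card_univ, Fintype.card_fin]
  · intro x _ y _ hxy
    apply Finset.disjoint_left.mpr
    intro s hs hs'
    rw [Finset.mem_powersetCard] at hs hs'
    exact hxy (hs.2 ▸ hs'.2)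

lemma count_master {m n K : ℕ} (A : Matrix (Fin m) (Fin n) (ZMod 2))
    (v : Fin n → Fin m → ZMod 2) (hv : ∀ i r, v i r = A r i) (hK : 1 ≤ K)
    (hpairs : ∀ i : Fin n, v i ≠ 0 →
      ∃ P : Finset (Finset (Fin n)),
        K ≤ P.card ∧
        (P : Set (Finset (Fin n))).PairwiseDisjoint id ∧
        ∀ s ∈ P, ∃ j l : Fin n, j ≠ l ∧ s = {j, l} ∧ i ∉ s ∧ v i = v j + v l) :
    2 ^ A.rank ≤ ∑ i ∈ Finset.range (n / (K + 1) + 1), n.choose i := by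
  classical
  set W := LinearMap.ker A.mulVecLin with hW
  set R := n / (K + 1) with hR
  -- injection from the quotient into small finsets
  have hcov := covering A v hv hpairs
  set QT := (Fin n → ZMod 2) ⧸ W with hQT
  have hsur := Submodule.Quotient.mk_surjective W
  have hcov2 : ∀ q : QT, ∃ s : Finset (Fin n), s.card ≤ R ∧
      Submodule.Quotient.mk (p := W) (ind s) = q := by
    intro q
    obtain ⟨y, hy⟩ := hsur q
    obtain ⟨s, hs1, hs2⟩ := hcov y
    refine ⟨s, ?_, by rw [hs2, hy]⟩
    rw [hR, Nat.le_div_iff_mul_le (by omega : 0 < K + 1)]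
    exact hs1
  choose f hf1 hf2 using hcov2
  have hinj : Function.Injective (fun q => (⟨f q, hf1 q⟩ : {s : Finset (Fin n) // s.card ≤ R})) := by
    intro q q' h
    have : f q = f q' := congrArg Subtype.val h
    rw [← hf2 q, ← hf2 q', this]
  have hcard : Nat.card QT ≤ Nat.card {s : Finset (Fin n) // s.card ≤ R} :=
    Nat.card_le_card_of_injective _ hinj
  -- cardinality computations
  letI : Fintype QT := Fintype.ofFinite _
  have h1 : Nat.card QT = 2 ^ Module.finrank (ZMod 2) QT := by
    rw [Nat.card_eq_fintype_card, Module.card_eq_pow_finrank (K := ZMod 2) (V := QT), ZMod.card]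
  have h2 : Nat.card {s : Finset (Fin n) // s.card ≤ R}
      = ∑ i ∈ Finset.range (R + 1), n.choose i := by
    rw [Nat.card_eq_fintype_card, card_ball]
  -- finrank of quotient equals rank of A
  have h3 : Module.finrank (ZMod 2) QT + Module.finrank (ZMod 2) W
      = n := by
    have := Submodule.finrank_quotient_add_finrank W
    rwa [Module.finrank_fintype_fun_eq_card, Fintype.card_fin] at this
  have h4 : A.rank + Module.finrank (ZMod 2) W = n := by
    have := LinearMap.finrank_range_add_finrank_ker A.mulVecLin
    rwa [Module.finrank_fintype_fun_eq_card, Fintype.card_fin] at this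
  have h5 : Module.finrank (ZMod 2) QT = A.rank := by omega
  rw [← h5]
  calc 2 ^ Module.finrank (ZMod 2) QT = Nat.card QT := h1.symm
  _ ≤ _ := hcard.trans_eq h2

lemma xlog_mono {nr a b : ℝ} (ha : 0 < a) (hab : a ≤ b) (hbn : b ≤ nr) :
    a * (1 + Real.log (nr / a)) ≤ b * (1 + Real.log (nr / b)) := by
  have hb : 0 < b := ha.trans_le hab
  have hnr : 0 < nr := hb.trans_le hbn
  have h1 : Real.log (nr / a) = Real.log (nr / b) + Real.log (b / a) := by
    rw [← Real.log_mul (by positivity) (by positivity)]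
    congr 1
    field_simp
  have h2 : (0:ℝ) ≤ Real.log (nr / b) := Real.log_nonneg (by rw [le_div_iff₀ hb]; linarith)
  have h3 : Real.log (b / a) ≤ b / a - 1 := Real.log_le_sub_one_of_pos (by positivity)
  have h4 : a * Real.log (b / a) ≤ b - a := by
    calc a * Real.log (b / a) ≤ a * (b / a - 1) := mul_le_mul_of_nonneg_left h3 ha.le
    _ = b - a := by field_simp
  have h5 : a * Real.log (nr / b) ≤ b * Real.log (nr / b) := mul_le_mul_of_nonneg_right hab h2
  calc a * (1 + Real.log (nr / a)) = a + a * Real.log (nr / b) + a * Real.log (b / a) := by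
        rw [h1]; ring
  _ ≤ b + b * Real.log (nr / b) := by linarith
  _ = b * (1 + Real.log (nr / b)) := by ring

lemma analysis (n K : ℕ) (hK : 1 ≤ K) :
    Real.logb 2 (∑ i ∈ Finset.range (n / (K + 1) + 1), (n.choose i : ℝ)) ≤
      ((n : ℝ) * Real.logb 2 ((K : ℝ) + 1) + (n : ℝ) / Real.log 2) / ((K : ℝ) + 1) := by
  have hlog2 : (0:ℝ) < Real.log 2 := Real.log_pos (by norm_num)
  have hKc : (0:ℝ) ≤ (K:ℝ) := Nat.cast_nonneg K
  have hK1 : (0:ℝ) < (K:ℝ) + 1 := by positivity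
  have hlogbK : 0 ≤ Real.logb 2 ((K:ℝ) + 1) :=
    Real.logb_nonneg (by norm_num) (by linarith)
  set R := n / (K + 1) with hR
  by_cases hR0 : R = 0
  · rw [hR0]
    norm_num [Finset.sum_range_one]
    apply div_nonneg _ hK1.le
    apply add_nonneg
    · exact mul_nonneg (Nat.cast_nonneg n) hlogbK
    · exact div_nonneg (Nat.cast_nonneg n) hlog2.le
  · have hR1 : 1 ≤ R := Nat.one_le_iff_ne_zero.mpr hR0
    have hnK : K + 1 ≤ n := by
      have h1 : 1 ≤ n / (K + 1) := by rw [← hR]; exact hR1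
      have h2 := (Nat.le_div_iff_mul_le (by omega : 0 < K + 1)).mp h1
      omega
    have hn1 : 1 ≤ n := by omega
    have hn0 : (0:ℝ) < n := by exact_mod_cast hn1
    have hRn : R ≤ n := Nat.div_le_self n (K+1)
    have hRpos : (0:ℝ) < R := by exact_mod_cast hR1
    set x : ℝ := (R : ℝ) / n with hx
    have hx0 : 0 < x := by positivity
    have hx1 : x ≤ 1 := by
      rw [hx, div_le_one hn0]
      exact_mod_cast hRn
    set B : ℝ := ∑ i ∈ Finset.range (R + 1), (n.choose i : ℝ) with hB
    have hB1 : (1:ℝ) ≤ B := by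
      have h0 : (0:ℕ) ∈ Finset.range (R+1) := by simp
      have := Finset.single_le_sum (f := fun i => (n.choose i : ℝ))
        (fun i _ => Nat.cast_nonneg _) h0
      simpa using this
    have hBpos : (0:ℝ) < B := by linarith
    have hA : B * x ^ R ≤ (1 + x) ^ n := by
      have hs1 : B * x ^ R ≤ ∑ i ∈ Finset.range (R + 1), (n.choose i : ℝ) * x ^ i := by
        rw [hB, Finset.sum_mul]
        apply Finset.sum_le_sum
        intro i hi
        apply mul_le_mul_of_nonneg_left _ (Nat.cast_nonneg _)
        exact pow_le_pow_of_le_one hx0.le hx1 (Finset.mem_range_succ_iff.mp hi)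
      have hs2 : ∑ i ∈ Finset.range (R + 1), (n.choose i : ℝ) * x ^ i ≤
          ∑ i ∈ Finset.range (n + 1), (n.choose i : ℝ) * x ^ i := by
        apply Finset.sum_le_sum_of_subset_of_nonneg
        · exact Finset.range_subset_range.mpr (by omega)
        · intro i _ _
          positivity
      have hbinom : ∑ i ∈ Finset.range (n + 1), (n.choose i : ℝ) * x ^ i = (1 + x) ^ n := by
        calc ∑ i ∈ Finset.range (n + 1), (n.choose i : ℝ) * x ^ i
            = ∑ i ∈ Finset.range (n + 1), x ^ i * 1 ^ (n - i) * (n.choose i : ℝ) := by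
              apply Finset.sum_congr rfl
              intro i _
              ring
        _ = (x + 1) ^ n := (add_pow x 1 n).symm
        _ = (1 + x) ^ n := by rw [add_comm]
      exact hs1.trans (hs2.trans_eq hbinom)
    have hxR : (0:ℝ) < x ^ R := by positivity
    have hlogB : Real.log B ≤ (n:ℝ) * Real.log (1 + x) - (R:ℝ) * Real.log x := by
      have hBle : B ≤ (1 + x) ^ n / x ^ R := (le_div_iff₀ hxR).mpr hA
      have hl := Real.log_le_log hBpos hBle
      rwa [Real.log_div (by positivity) (by positivity), Real.log_pow, Real.log_pow] at hl
    have hC : (n:ℝ) * Real.log (1 + x) ≤ (R:ℝ) := by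
      have hl : Real.log (1 + x) ≤ x := by
        have := Real.log_le_sub_one_of_pos (show (0:ℝ) < 1 + x by linarith)
        linarith
      calc (n:ℝ) * Real.log (1 + x) ≤ (n:ℝ) * x := mul_le_mul_of_nonneg_left hl hn0.le
      _ = R := by rw [hx]; field_simp
    have hD : Real.log ((n:ℝ)/(R:ℝ)) = - Real.log x := by
      rw [hx, ← Real.log_inv]
      congr 1
      rw [inv_div]
    have hmid : Real.log B ≤ (R:ℝ) * (1 + Real.log ((n:ℝ)/(R:ℝ))) := by
      have : (R:ℝ) * Real.log ((n:ℝ)/(R:ℝ)) = - ((R:ℝ) * Real.log x) := by rw [hD]; ring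
      nlinarith [hlogB, hC]
    have hab : (R:ℝ) ≤ (n:ℝ)/((K:ℝ)+1) := by
      have h := Nat.cast_div_le (α := ℝ) (m := n) (n := K+1)
      rw [hR]
      push_cast at h ⊢
      exact h
    have hbn : (n:ℝ)/((K:ℝ)+1) ≤ (n:ℝ) := by
      rw [div_le_iff₀ hK1]
      nlinarith
    have hE := xlog_mono hRpos hab hbn
    have hF : (n:ℝ)/((n:ℝ)/((K:ℝ)+1)) = (K:ℝ)+1 := by
      field_simp
    rw [hF] at hE
    have hfinal : Real.log B ≤ (n:ℝ)/((K:ℝ)+1) * (1 + Real.log ((K:ℝ)+1)) :=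
      hmid.trans hE
    -- convert to logb
    rw [show Real.logb 2 B = Real.log B / Real.log 2 from rfl]
    have hRHS : ((n:ℝ) * Real.logb 2 ((K:ℝ)+1) + (n:ℝ)/Real.log 2)/((K:ℝ)+1)
        = ((n:ℝ)/((K:ℝ)+1) * (1 + Real.log ((K:ℝ)+1)))/Real.log 2 := by
      rw [show Real.logb 2 ((K:ℝ)+1) = Real.log ((K:ℝ)+1) / Real.log 2 from rfl]
      field_simp
      ring
    rw [hRHS]
    gcongr

end MainAux

/-- The dual of a set of vectors in `F₂ⁿ`: all vectors orthogonal to every element. -/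
def dualSet {n : ℕ} (V : Set (Fin n → ZMod 2)) : Set (Fin n → ZMod 2) :=
  {y | ∀ x ∈ V, ∑ i, x i * y i = 0}

/-- Dimension bound: if every nonzero column of `G` has at least `K` pairwise disjoint
representations as a sum of two other columns, then
`dim V ≤ log₂(Σ_{i=0}^{⌊n/(K+1)⌋} C(n,i)) ≤ (n log₂(K+1) + n/ln 2)/(K+1)`. -/
theorem main_lemma_dimension_bound
    (m n K : ℕ) (hK : 1 ≤ K)
    (G : Fin m → Fin n → ZMod 2)
    (v : Fin n → Fin m → ZMod 2) (hv : ∀ i r, v i r = G r i)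
    (V : Submodule (ZMod 2) (Fin n → ZMod 2))
    (hV : V = Submodule.span (ZMod 2) (Set.range G))
    (hpairs : ∀ i : Fin n, v i ≠ 0 →
      ∃ P : Finset (Finset (Fin n)),
        K ≤ P.card ∧
        (P : Set (Finset (Fin n))).PairwiseDisjoint id ∧
        ∀ s ∈ P, ∃ j l : Fin n, j ≠ l ∧ s = {j, l} ∧ i ∉ s ∧ v i = v j + v l) :
    (Module.finrank (ZMod 2) V : ℝ) ≤
        Real.logb 2 (∑ i ∈ Finset.range (n / (K + 1) + 1), (n.choose i : ℝ)) ∧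
      Real.logb 2 (∑ i ∈ Finset.range (n / (K + 1) + 1), (n.choose i : ℝ)) ≤
        ((n : ℝ) * Real.logb 2 ((K : ℝ) + 1) + (n : ℝ) / Real.log 2) / ((K : ℝ) + 1) := by
  classical
  set A : Matrix (Fin m) (Fin n) (ZMod 2) := Matrix.of G with hA
  have hrank : Module.finrank (ZMod 2) V = A.rank := by
    have h1 : V = LinearMap.range A.vecMulLinear := by
      rw [hV, range_vecMulLinear]
      rfl
    have h2 : A.vecMulLinear = (Matrix.transpose A).mulVecLin := (Matrix.mulVecLin_transpose A).symm
    rw [h1, h2]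
    exact Matrix.rank_transpose A
  have hcount := MainAux.count_master A v (fun i r => hv i r) hK hpairs
  refine ⟨?_, MainAux.analysis n K hK⟩
  rw [hrank]
  have hcast : ((2:ℝ)) ^ A.rank ≤ ∑ i ∈ Finset.range (n / (K + 1) + 1), (n.choose i : ℝ) := by
    exact_mod_cast hcount
  have hpow : (0:ℝ) < (2:ℝ) ^ A.rank := by positivity
  have hlogid : Real.logb 2 ((2:ℝ) ^ A.rank) = (A.rank : ℝ) := by
    rw [show Real.logb 2 ((2:ℝ) ^ A.rank) =
      Real.log ((2:ℝ) ^ A.rank) / Real.log 2 from rfl, Real.log_pow]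
    have : Real.log 2 ≠ 0 := ne_of_gt (Real.log_pos (by norm_num))
    field_simp
  calc (A.rank : ℝ) = Real.logb 2 ((2:ℝ) ^ A.rank) := hlogid.symm
  _ ≤ _ := Real.logb_le_logb_of_le (by norm_num) hpow hcast
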